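/- For λ ∈ (0,1], ∑_{n=1}^∞ |γ_n(f_λ)|² = (1/4)(π²/6 + 2Li₂(λ) + Li₂(λ²)) + (1/2)[Li₂(−λ²/(1+λ)) + Li₂(−λ/(1+λ))] + (1/4)Li₂(λ²/(1+λ)²), where γ_n(f_λ) = (1/2)((1+λ^n)/n + (−1)^n λ^n/(n(1+λ)^n)). -/

import Mathlib

open Real

/-- Dilogarithm on the reals: Li₂(x) = ∑_{n≥1} xⁿ/n². -/
noncomputable def Li2 (x : ℝ) : ℝ := ∑' n : ℕ, x ^ (n + 1) / ((n : ℝ) + 1) ^ 2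

set_option maxRecDepth 8000

lemma hasSum_basel_succ : HasSum (fun n : ℕ => (1 : ℝ) / ((n : ℝ) + 1) ^ 2) (π ^ 2 / 6) := by
  have h := (hasSum_nat_add_iff' (f := fun n : ℕ => (1 : ℝ) / (n : ℝ) ^ 2) 1).2 hasSum_zeta_two
  simp only [Finset.range_one, Finset.sum_singleton, Nat.cast_zero] at h
  norm_num at h
  convert h using 2
  push_cast
  · rfl
  ring

lemma summable_Li2 (x : ℝ) (hx : |x| ≤ 1) :
    Summable (fun n : ℕ => x ^ (n + 1) / ((n : ℝ) + 1) ^ 2) := by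
  apply Summable.of_abs
  apply Summable.of_nonneg_of_le (fun n => abs_nonneg _) _ hasSum_basel_succ.summable
  intro n
  have hp : (0:ℝ) < ((n : ℝ) + 1) ^ 2 := by positivity
  rw [abs_div, abs_pow, abs_of_pos hp, div_le_div_iff₀ hp hp]
  have : |x| ^ (n + 1) ≤ 1 := pow_le_one₀ (abs_nonneg x) hx
  nlinarith

lemma hasSum_Li2 (x : ℝ) (hx : |x| ≤ 1) :
    HasSum (fun n : ℕ => x ^ (n + 1) / ((n : ℝ) + 1) ^ 2) (Li2 x) :=
  (summable_Li2 x hx).hasSum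

theorem stmt_11 (lam : ℝ) (hl0 : 0 < lam) (hl1 : lam ≤ 1)
    (γ : ℕ → ℝ)
    (hγ : ∀ n : ℕ, 1 ≤ n →
      γ n = (1 / 2) * ((1 + lam ^ n) / n + (-1) ^ n * lam ^ n / (n * (1 + lam) ^ n))) :
    ∑' n : ℕ, |γ (n + 1)| ^ 2
      = (1 / 4) * (π ^ 2 / 6 + 2 * Li2 lam + Li2 (lam ^ 2))
        + (1 / 2) * (Li2 (-lam ^ 2 / (1 + lam)) + Li2 (-lam / (1 + lam)))
        + (1 / 4) * Li2 (lam ^ 2 / (1 + lam) ^ 2) := by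
  have h1l : (0:ℝ) < 1 + lam := by linarith
  have hx1 : |lam| ≤ 1 := by rw [abs_of_pos hl0]; exact hl1
  have hx2 : |lam ^ 2| ≤ 1 := by
    rw [abs_of_nonneg (by positivity)]; nlinarith
  have hx3 : |(-lam ^ 2 / (1 + lam))| ≤ 1 := by
    rw [abs_div, abs_of_pos h1l, div_le_one h1l, abs_neg, abs_of_nonneg (by positivity)]
    nlinarith
  have hx4 : |(-lam / (1 + lam))| ≤ 1 := by
    rw [abs_div, abs_of_pos h1l, div_le_one h1l, abs_neg, abs_of_pos hl0]
    linarith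
  have hx5 : |(lam ^ 2 / (1 + lam) ^ 2)| ≤ 1 := by
    rw [abs_of_nonneg (by positivity), div_le_one (by positivity)]
    nlinarith
  have H : HasSum (fun n : ℕ => |γ (n + 1)| ^ 2)
      ((1 / 4) * (π ^ 2 / 6 + 2 * Li2 lam + Li2 (lam ^ 2))
        + (1 / 2) * (Li2 (-lam ^ 2 / (1 + lam)) + Li2 (-lam / (1 + lam)))
        + (1 / 4) * Li2 (lam ^ 2 / (1 + lam) ^ 2)) := by
    have h0 := hasSum_basel_succ
    have h1 := hasSum_Li2 lam hx1
    have h2 := hasSum_Li2 (lam ^ 2) hx2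
    have h3 := hasSum_Li2 (-lam ^ 2 / (1 + lam)) hx3
    have h4 := hasSum_Li2 (-lam / (1 + lam)) hx4
    have h5 := hasSum_Li2 (lam ^ 2 / (1 + lam) ^ 2) hx5
    have Hsum := ((((h0.add (h1.mul_left 2)).add h2).mul_left (1/4)).add
        ((h3.add h4).mul_left (1/2))).add (h5.mul_left (1/4))
    have key : (fun n : ℕ => |γ (n + 1)| ^ 2)
        = fun n : ℕ =>
          1 / 4 * (1 / ((n : ℝ) + 1) ^ 2 + 2 * (lam ^ (n + 1) / ((n : ℝ) + 1) ^ 2)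
              + (lam ^ 2) ^ (n + 1) / ((n : ℝ) + 1) ^ 2)
            + 1 / 2 * ((-lam ^ 2 / (1 + lam)) ^ (n + 1) / ((n : ℝ) + 1) ^ 2
              + (-lam / (1 + lam)) ^ (n + 1) / ((n : ℝ) + 1) ^ 2)
            + 1 / 4 * ((lam ^ 2 / (1 + lam) ^ 2) ^ (n + 1) / ((n : ℝ) + 1) ^ 2) := by
      funext n
      have hm := hγ (n + 1) (by omega)
      have hc : ((n + 1 : ℕ) : ℝ) = (n : ℝ) + 1 := by push_cast; ring
      have hne : ((n : ℝ) + 1) ≠ 0 := by positivity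
      have hne2 : (1 + lam) ≠ 0 := ne_of_gt h1l
      rw [hm, sq_abs, hc]
      have e1 : (-lam ^ 2 / (1 + lam)) = -(lam ^ 2 / (1 + lam)) := by ring
      have e2 : (-lam / (1 + lam)) = -(lam / (1 + lam)) := by ring
      rw [e1, e2]
      have p1 : (lam ^ 2) ^ (n + 1) = (lam ^ (n + 1)) ^ 2 := by
        rw [← pow_mul, ← pow_mul, Nat.mul_comm]
      have p2 : ((1 + lam) ^ 2) ^ (n + 1) = ((1 + lam) ^ (n + 1)) ^ 2 := by
        rw [← pow_mul, ← pow_mul, Nat.mul_comm]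
      rcases Nat.even_or_odd (n + 1) with he | ho
      · rw [he.neg_pow, he.neg_pow, he.neg_pow]
        simp only [div_pow, one_pow, p1, p2]
        set a := lam ^ (n + 1)
        set b := (1 + lam) ^ (n + 1) with hbdef
        have hb : b ≠ 0 := pow_ne_zero _ hne2
        field_simp
        ring
      · rw [ho.neg_pow, ho.neg_pow, ho.neg_pow]
        simp only [div_pow, one_pow, p1, p2]
        set a := lam ^ (n + 1)
        set b := (1 + lam) ^ (n + 1) with hbdef
        have hb : b ≠ 0 := pow_ne_zero _ hne2
        field_simp
        ring
    rw [key]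
    exact Hsum
  exact H.tsum_eq
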